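/- arXiv:0708.2078 — 3 statements merged into one kernel-verified Lean document; each statement's English description precedes it below -/
import Mathlib

section
/- Let K be a field and A = K[x]. Let M = A^{1×3}/(A^{1×2}R) where R is the 2×3 matrix with rows (x^2 + c, 0, -c) and (0, x^2 + c, -c) for a nonzero constant c ∈ K. Then the torsion submodule of M is nonzero and is annihilated by the ideal generated by x^2 + c. -/
open Polynomial

theorem stmt_0 {K : Type*} [Field K] (c : K) (hc : c ≠ 0) :
    Submodule.torsion (Polynomial K)
      ((Fin 3 → Polynomial K) ⧸ Submodule.span (Polynomial K)
        ({![X ^ 2 + C c, 0, -C c], ![0, X ^ 2 + C c, -C c]} :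
          Set (Fin 3 → Polynomial K))) ≠ ⊥ ∧
    ∀ m ∈ Submodule.torsion (Polynomial K)
      ((Fin 3 → Polynomial K) ⧸ Submodule.span (Polynomial K)
        ({![X ^ 2 + C c, 0, -C c], ![0, X ^ 2 + C c, -C c]} :
          Set (Fin 3 → Polynomial K))),
      (X ^ 2 + C c) • m = 0 := by
  set p : Polynomial K := X ^ 2 + C c with hp
  have hpdeg : p.natDegree = 2 := natDegree_X_pow_add_C
  have hpne : p ≠ 0 := by
    intro h; rw [h] at hpdeg; simp at hpdeg
  constructor
  · rw [Submodule.ne_bot_iff]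
    refine ⟨Submodule.Quotient.mk ![1, -1, 0],
      ⟨⟨p, mem_nonZeroDivisors_of_ne_zero hpne⟩, ?_⟩, ?_⟩
    · rw [Submonoid.smul_def, ← Submodule.Quotient.mk_smul, Submodule.Quotient.mk_eq_zero,
        Submodule.mem_span_pair]
      refine ⟨1, -1, ?_⟩
      funext i; fin_cases i <;> simp [smul_eq_mul] <;> ring
    · rw [ne_eq, Submodule.Quotient.mk_eq_zero, Submodule.mem_span_pair]
      rintro ⟨u, t, h⟩
      have h0 := congrFun h 0
      simp [smul_eq_mul] at h0
      have hu : IsUnit p := IsUnit.of_mul_eq_one (a := p) u (by rw [mul_comm]; exact h0)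
      have := Polynomial.natDegree_eq_zero_of_isUnit hu
      omega
  · rintro m ⟨⟨a, ha⟩, ham⟩
    have ha0 : a ≠ 0 := nonZeroDivisors.ne_zero ha
    obtain ⟨w, rfl⟩ := Submodule.Quotient.mk_surjective _ m
    rw [Submonoid.smul_def] at ham
    rw [← Submodule.Quotient.mk_smul, Submodule.Quotient.mk_eq_zero,
      Submodule.mem_span_pair] at ham
    obtain ⟨u, t, h⟩ := ham
    have h0 := congrFun h 0
    have h1 := congrFun h 1
    have h2 := congrFun h 2
    simp [smul_eq_mul] at h0 h1 h2
    rw [← Submodule.Quotient.mk_smul, Submodule.Quotient.mk_eq_zero,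
      Submodule.mem_span_pair]
    refine ⟨w 0, w 1, ?_⟩
    funext i; fin_cases i
    · simp [smul_eq_mul]; ring
    · simp [smul_eq_mul]; ring
    · simp [smul_eq_mul]
      apply mul_left_cancel₀ ha0
      linear_combination (C c) * h0 + (C c) * h1 + p * h2
end

section
/- Let K be a field and A = K[x]. Let M = A^{1×3}/(A^{1×2}R) where R is the 2×3 matrix with rows (x^2 + c₁, 0, -c₁) and (0, x^2 + c₂, -c₂) for distinct nonzero constants c₁ ≠ c₂ in K. Then M is torsion-free. -/
open Polynomial

theorem stmt_1 {K : Type*} [Field K] (c₁ c₂ : K) (h₁ : c₁ ≠ 0) (h₂ : c₂ ≠ 0)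
    (hne : c₁ ≠ c₂) :
    Submodule.torsion (Polynomial K)
      ((Fin 3 → Polynomial K) ⧸ Submodule.span (Polynomial K)
        ({![X ^ 2 + C c₁, 0, -C c₁], ![0, X ^ 2 + C c₂, -C c₂]} :
          Set (Fin 3 → Polynomial K))) = ⊥ := by
  set f : Polynomial K := X ^ 2 + C c₁ with hf
  set g : Polynomial K := X ^ 2 + C c₂ with hg
  set N : Submodule (Polynomial K) (Fin 3 → Polynomial K) :=
    Submodule.span (Polynomial K) ({![f, 0, -C c₁], ![0, g, -C c₂]} :
      Set (Fin 3 → Polynomial K)) with hN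
  set φ : (Fin 3 → Polynomial K) →ₗ[Polynomial K] Polynomial K :=
    { toFun := fun v => C c₁ * g * v 0 + C c₂ * f * v 1 + f * g * v 2
      map_add' := by intro a b; simp only [Pi.add_apply]; ring
      map_smul' := by intro r a; simp only [Pi.smul_apply, smul_eq_mul,
        RingHom.id_apply]; ring } with hφ
  have hsub : (c₂ - c₁) ≠ 0 := sub_ne_zero.mpr (Ne.symm hne)
  have hfg : IsCoprime f g := by
    refine ⟨-(C (c₂ - c₁)⁻¹), C (c₂ - c₁)⁻¹, ?_⟩
    have h : C (c₂ - c₁)⁻¹ * C (c₂ - c₁) = 1 := by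
      rw [← C_mul, inv_mul_cancel₀ hsub, C_1]
    calc -(C (c₂ - c₁)⁻¹) * f + C (c₂ - c₁)⁻¹ * g
        = C (c₂ - c₁)⁻¹ * C (c₂ - c₁) := by rw [hf, hg, C_sub]; ring
      _ = 1 := h
  have hf0 : f ≠ 0 := by
    intro h
    have := congrArg (fun p => p.coeff 2) h
    simp [hf, coeff_C] at this
  have hg0 : g ≠ 0 := by
    intro h
    have := congrArg (fun p => p.coeff 2) h
    simp [hg, coeff_C] at this
  have huc₁ : IsUnit (C c₁) := isUnit_C.mpr h₁.isUnit
  have huc₂ : IsUnit (C c₂) := isUnit_C.mpr h₂.isUnit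
  have hker : ∀ v, φ v = 0 → v ∈ N := by
    intro v hv
    simp only [hφ, LinearMap.coe_mk, AddHom.coe_mk] at hv
    have hdvd0 : f ∣ v 0 := by
      have hco : IsCoprime f (C c₁ * g) :=
        (isCoprime_mul_unit_left_right huc₁ f g).mpr hfg
      refine hco.dvd_of_dvd_mul_left ?_
      refine ⟨-(C c₂ * v 1 + g * v 2), ?_⟩
      linear_combination hv
    have hdvd1 : g ∣ v 1 := by
      have hco : IsCoprime g (C c₂ * f) :=
        (isCoprime_mul_unit_left_right huc₂ g f).mpr hfg.symm
      refine hco.dvd_of_dvd_mul_left ?_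
      refine ⟨-(C c₁ * v 0 + f * v 2), ?_⟩
      linear_combination hv
    obtain ⟨p, hp⟩ := hdvd0
    obtain ⟨q, hq⟩ := hdvd1
    have hv2 : v 2 = -(C c₁ * p + C c₂ * q) := by
      have hfg0 : f * g ≠ 0 := mul_ne_zero hf0 hg0
      have : f * g * (v 2 + (C c₁ * p + C c₂ * q)) = 0 := by
        rw [hp, hq] at hv; linear_combination hv
      have h := (mul_eq_zero.mp this).resolve_left hfg0
      linear_combination h
    rw [hN, Submodule.mem_span_pair]
    refine ⟨p, q, ?_⟩
    funext i
    fin_cases i <;>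
      simp only [Pi.add_apply, Pi.smul_apply, smul_eq_mul, Matrix.cons_val_zero,
        Matrix.cons_val_one, Matrix.head_cons, Matrix.cons_val_two, Matrix.tail_cons,
        Fin.zero_eta, Fin.mk_one, Fin.reduceFinMk, Fin.isValue]
    · rw [hp]; ring
    · rw [hq]; ring
    · rw [hv2]; ring
  have hNker : N ≤ LinearMap.ker φ := by
    rw [hN, Submodule.span_le]
    rintro w hw
    rcases hw with rfl | rfl <;>
      simp only [SetLike.mem_coe, LinearMap.mem_ker, hφ, LinearMap.coe_mk,
        AddHom.coe_mk, Matrix.cons_val_zero, Matrix.cons_val_one, Matrix.head_cons,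
        Matrix.cons_val_two, Matrix.tail_cons] <;> ring
  rw [Submodule.eq_bot_iff]
  rintro x ⟨⟨a, ha⟩, hax⟩
  obtain ⟨v, rfl⟩ := N.mkQ_surjective x
  simp only [Submonoid.mk_smul] at hax
  have hav : a • v ∈ N := by
    rwa [← map_smul, Submodule.mkQ_apply, Submodule.Quotient.mk_eq_zero] at hax
  have h0 : a * φ v = 0 := by
    have := hNker hav
    rw [LinearMap.mem_ker, map_smul, smul_eq_mul] at this
    exact this
  have hφv : φ v = 0 := by
    rcases mul_eq_zero.mp h0 with h | h
    · exact absurd h (nonZeroDivisors.ne_zero ha)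
    · exact h
  rw [Submodule.mkQ_apply, Submodule.Quotient.mk_eq_zero]
  exact hker v hφv
end

section
/- Let K be a field, A = K[x], and let R be the 2×3 matrix with rows (x^2 + c₁, 0, -c₁) and (0, x^2 + c₂, -c₂) with c₁ ≠ c₂ nonzero in K. Then R admits a right inverse, i.e., there exists a 3×2 matrix S over A with R·S = I₂. -/
open Polynomial

theorem stmt_2 {K : Type*} [Field K] (c₁ c₂ : K) (h₁ : c₁ ≠ 0) (h₂ : c₂ ≠ 0)
    (hne : c₁ ≠ c₂) :
    ∃ S : Matrix (Fin 3) (Fin 2) (Polynomial K),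
      (Matrix.of ![![X ^ 2 + C c₁, 0, -C c₁], ![0, X ^ 2 + C c₂, -C c₂]]) * S = 1 := by
  have hd : c₂ - c₁ ≠ 0 := sub_ne_zero.mpr (Ne.symm hne)
  set A : K[X] := C c₁⁻¹ with hAdef
  set B : K[X] := C c₂⁻¹ with hBdef
  set E : K[X] := C (c₂ - c₁)⁻¹ with hEdef
  have hA : C c₁ * A = 1 := by rw [hAdef, ← C_mul, mul_inv_cancel₀ h₁, C_1]
  have hB : C c₂ * B = 1 := by rw [hBdef, ← C_mul, mul_inv_cancel₀ h₂, C_1]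
  have hE : (C c₂ - C c₁) * E = 1 := by
    rw [hEdef, ← C_sub, ← C_mul, mul_inv_cancel₀ hd, C_1]
  refine ⟨Matrix.of ![![-E, C c₁ * B * E],
      ![-(C c₂ * A * E), E],
      ![-(A * E) * (X ^ 2 + C c₂), (B * E) * (X ^ 2 + C c₁)]], ?_⟩
  apply Matrix.ext
  intro i j
  fin_cases i <;> fin_cases j <;>
    simp [Matrix.mul_apply, Fin.sum_univ_succ]
  · linear_combination (E * (X ^ 2 + C c₂)) * hA + hE
  · ring
  · ring
  · linear_combination (-(E * (X ^ 2 + C c₁))) * hB + hE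
end
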